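/- For every β ∈ ℂ with Re β ≥ 0, the product L↓_β L↑_β is a compact operator on H^∞(Π). -/

import Mathlib

open Complex BoundedContinuousFunction
open scoped ENNReal

/-- The open right half-plane `Π = {z : ℂ | 0 < Re z}`. -/
def RHP : Set ℂ := {z : ℂ | 0 < z.re}

/-- Extension of a bounded continuous function on `Π` to `ℂ` (by zero off `Π`). -/
noncomputable def extFun (f : ↥RHP →ᵇ ℂ) : ℂ → ℂ :=
  fun z => if h : 0 < z.re then f ⟨z, h⟩ else 0

/-- `H^∞(Π)`: the space of bounded holomorphic functions on `Π`, realised as the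
submodule of the Banach space of bounded continuous functions on `Π` (with the
supremum norm) consisting of the holomorphic ones. -/
noncomputable def Hinf : Submodule ℂ (↥RHP →ᵇ ℂ) where
  carrier := {f | DifferentiableOn ℂ (extFun f) RHP}
  add_mem' := by
    intro f g hf hg
    refine (DifferentiableOn.add hf hg).congr (fun z hz => ?_)
    have hz' : 0 < z.re := hz
    simp only [extFun]
    first
      | (simp only [Pi.add_apply, dif_pos hz']; rfl)
      | simp [extFun, hz']
  zero_mem' := by
    refine (differentiableOn_const 0).congr (fun z hz => ?_)
    have hz' : 0 < z.re := hz
    simp only [extFun]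
    rw [dif_pos hz']
    rfl
  smul_mem' := by
    intro c f hf
    refine (hf.const_smul c).congr (fun z hz => ?_)
    have hz' : 0 < z.re := hz
    simp only [extFun]
    first
      | (simp only [Pi.smul_apply, dif_pos hz']; rfl)
      | simp [extFun, hz']

lemma mem_shift (z : ↥RHP) : (1 : ℂ) + z.1 ∈ RHP := by
  have hz := z.2
  simp only [RHP, Set.mem_setOf_eq, Complex.add_re, Complex.one_re] at *
  linarith

lemma mem_div (z : ↥RHP) : z.1 / (1 + z.1) ∈ RHP := by
  have hz := z.2
  simp only [RHP, Set.mem_setOf_eq] at hz ⊢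
  have hw : (1 + z.1) ≠ 0 := by
    intro h
    have h2 : (1 + z.1).re = 0 := by rw [h]; simp
    simp only [Complex.add_re, Complex.one_re] at h2
    linarith
  have hns : 0 < Complex.normSq (1 + z.1) := Complex.normSq_pos.mpr hw
  rw [Complex.div_re]
  have h1 : 0 < z.1.re * (1 + z.1).re := by
    simp only [Complex.add_re, Complex.one_re]
    nlinarith
  have h2 : 0 ≤ z.1.im * (1 + z.1).im := by
    simp only [Complex.add_im, Complex.one_im, zero_add]
    nlinarith [sq_nonneg z.1.im]
  have := div_pos h1 hns
  have := div_nonneg h2 hns.le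
  linarith

/-- Pointwise characterisation of the transfer operator
`(L↑_β f)(z) = (1+z)^(-2β) f(z/(1+z))` on `H^∞(Π)` (principal branch power). -/
def IsLup (β : ℂ) (T : ↥Hinf →L[ℂ] ↥Hinf) : Prop :=
  ∀ f : ↥Hinf, ∀ z : ↥RHP,
    (T f).1 z = (1 + z.1) ^ (-(2 * β)) * f.1 ⟨z.1 / (1 + z.1), mem_div z⟩

/-- Pointwise characterisation of the transfer operator `(L↓ f)(z) = f(1+z)` on `H^∞(Π)`. -/
def IsLdn (T : ↥Hinf →L[ℂ] ↥Hinf) : Prop :=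
  ∀ f : ↥Hinf, ∀ z : ↥RHP, (T f).1 z = f.1 ⟨1 + z.1, mem_shift z⟩


lemma RHP_open : IsOpen RHP := isOpen_lt continuous_const Complex.continuous_re

lemma extFun_apply (f : ↥RHP →ᵇ ℂ) {z : ℂ} (hz : 0 < z.re) : extFun f z = f ⟨z, hz⟩ := by
  simp only [extFun]; rw [dif_pos hz]

lemma extFun_norm_le (f : ↥RHP →ᵇ ℂ) (z : ℂ) : ‖extFun f z‖ ≤ ‖f‖ := by
  by_cases hz : 0 < z.re
  · rw [extFun_apply f hz]; exact f.norm_coe_le_norm _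
  · simp only [extFun]; rw [dif_neg hz]; simp

lemma re_ge_of_mem_closedBall {z c : ℂ} {r : ℝ} (h : z ∈ Metric.closedBall c r) :
    c.re - r ≤ z.re := by
  have h1 : |(z - c).re| ≤ ‖z - c‖ := Complex.abs_re_le_norm _
  have h2 : ‖z - c‖ ≤ r := by rwa [Metric.mem_closedBall, Complex.dist_eq] at h
  have h3 := abs_le.mp (h1.trans h2)
  simp only [Complex.sub_re] at h3
  linarith [h3.1]

lemma re_gt_of_mem_ball {z c : ℂ} {r : ℝ} (h : z ∈ Metric.ball c r) :
    c.re - r < z.re := by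
  have h1 : |(z - c).re| ≤ ‖z - c‖ := Complex.abs_re_le_norm _
  have h2 : ‖z - c‖ < r := by rwa [Metric.mem_ball, Complex.dist_eq] at h
  have h3 := abs_le.mp h1
  simp only [Complex.sub_re] at h3
  linarith [h3.1]

lemma lip_on_K {f : ↥RHP →ᵇ ℂ} (hf : DifferentiableOn ℂ (extFun f) RHP) (hf1 : ‖f‖ ≤ 1)
    {x y : ℂ} (hx : x ∈ Metric.closedBall (3/4 : ℂ) (1/4))
    (hy : y ∈ Metric.closedBall (3/4 : ℂ) (1/4)) :
    dist (extFun f x) (extFun f y) ≤ 4 * dist x y := by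
  set U := Metric.ball (3/4 : ℂ) (2/5) with hU
  have hre : ((3:ℂ)/4).re = 3/4 := by norm_num
  have hUR : U ⊆ RHP := by
    intro z hz
    have := re_gt_of_mem_ball hz
    show 0 < z.re
    rw [hre] at this; linarith
  have hdiff : ∀ w ∈ U, DifferentiableAt ℂ (extFun f) w := fun w hw =>
    hf.differentiableAt (RHP_open.mem_nhds (hUR hw))
  have hderiv : ∀ w ∈ U, ‖deriv (extFun f) w‖ ≤ 4 := by
    intro w hw
    have hwre : 7/20 < w.re := by have := re_gt_of_mem_ball hw; rw [hre] at this; linarith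
    have hball : Metric.closedBall w (1/4) ⊆ RHP := by
      intro z hz
      have := re_ge_of_mem_closedBall hz
      show 0 < z.re; linarith
    have hd : DiffContOnCl ℂ (extFun f) (Metric.ball w (1/4)) := by
      apply DifferentiableOn.diffContOnCl
      apply hf.mono
      rw [closure_ball w (by norm_num : (1/4 : ℝ) ≠ 0)]
      exact hball
    have hest := Complex.norm_deriv_le_of_forall_mem_sphere_norm_le
      (by norm_num : (0:ℝ) < 1/4) hd (fun z _ => (extFun_norm_le f z).trans hf1)
    calc ‖deriv (extFun f) w‖ ≤ 1 / (1/4) := hest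
      _ = 4 := by norm_num
  have hsub : Metric.closedBall (3/4 : ℂ) (1/4) ⊆ U :=
    Metric.closedBall_subset_ball (by norm_num)
  have key := (convex_ball (3/4 : ℂ) (2/5)).norm_image_sub_le_of_norm_deriv_le
    hdiff hderiv (hsub hy) (hsub hx)
  rw [dist_eq_norm, dist_eq_norm]
  exact key

lemma phi_mem' {u : ℂ} (hu : 0 < u.re) :
    (1 + u) / (1 + (1 + u)) ∈ Metric.closedBall (3/4 : ℂ) (1/4) := by
  have hne : (2 + u) ≠ 0 := by
    intro h
    have : (2 + u).re = 0 := by rw [h]; simp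
    simp only [Complex.add_re] at this
    norm_num at this; linarith
  have h2 : (1 : ℂ) + (1 + u) = 2 + u := by ring
  rw [Metric.mem_closedBall, Complex.dist_eq, h2]
  have key : (1 + u) / (2 + u) - 3/4 = (u - 2) / (4 * (2 + u)) := by
    field_simp; ring
  rw [key, norm_div]
  have habs : ‖(u - 2)‖ ≤ ‖(2 + u)‖ := by
    rw [Complex.norm_def, Complex.norm_def]
    apply Real.sqrt_le_sqrt
    simp only [Complex.normSq_apply, Complex.sub_re, Complex.sub_im, Complex.add_re,
      Complex.add_im]
    norm_num; nlinarith
  have hpos : 0 < ‖(2 + u)‖ := norm_pos_iff.mpr hne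
  have h4 : ‖(4 * (2 + u))‖ = 4 * ‖(2 + u)‖ := by
    rw [norm_mul]; norm_num
  rw [h4, div_le_iff₀ (by positivity)]
  nlinarith

lemma M_bound' (β : ℂ) (hβ : 0 ≤ β.re) {u : ℂ} (hu : 0 < u.re) :
    ‖((2 + u) ^ (-(2 * β)))‖ ≤ Real.exp (Real.pi * |(2 * β).im|) := by
  have hne : (2 + u) ≠ 0 := by
    intro h
    have : (2 + u).re = 0 := by rw [h]; simp
    simp only [Complex.add_re] at this
    norm_num at this; linarith
  rw [Complex.norm_cpow_of_ne_zero hne]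
  have hre : (1 : ℝ) ≤ ‖(2 + u)‖ := by
    have h1 : (1:ℝ) ≤ (2 + u).re := by simp only [Complex.add_re]; norm_num; linarith
    exact h1.trans (Complex.re_le_norm _)
  have h1 : ‖(2 + u)‖ ^ ((-(2 * β)).re) ≤ 1 := by
    apply Real.rpow_le_one_of_one_le_of_nonpos hre
    simp only [Complex.neg_re, Complex.mul_re]
    norm_num; linarith
  have harg : |Complex.arg (2 + u)| ≤ Real.pi := Complex.abs_arg_le_pi _
  have h2 : Real.exp (-(Real.pi * |(2 * β).im|)) ≤
      Real.exp (Complex.arg (2 + u) * (-(2 * β)).im) := by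
    apply Real.exp_le_exp.mpr
    have hm : |Complex.arg (2 + u) * (-(2 * β)).im| ≤ Real.pi * |(2 * β).im| := by
      rw [abs_mul]
      have he : |(-(2 * β)).im| = |(2 * β).im| := by
        simp only [Complex.neg_im, abs_neg]
      rw [he]
      exact mul_le_mul_of_nonneg_right harg (abs_nonneg _)
    linarith [neg_abs_le (Complex.arg (2 + u) * (-(2 * β)).im)]
  calc ‖(2 + u)‖ ^ (-(2 * β)).re / Real.exp (Complex.arg (2 + u) * (-(2 * β)).im)
      ≤ 1 / Real.exp (-(Real.pi * |(2 * β).im|)) :=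
        div_le_div₀ zero_le_one h1 (Real.exp_pos _) h2
    _ = Real.exp (Real.pi * |(2 * β).im|) := by
        rw [one_div, ← Real.exp_neg, neg_neg]

set_option synthInstance.maxHeartbeats 1000000 in
lemma Hinf_closed : IsClosed (Hinf : Set (↥RHP →ᵇ ℂ)) := by
  apply IsSeqClosed.isClosed
  intro g f hg hgf
  show DifferentiableOn ℂ (extFun f) RHP
  have hloc : TendstoLocallyUniformlyOn (fun n => extFun (g n)) (extFun f) Filter.atTop RHP := by
    apply TendstoUniformlyOn.tendstoLocallyUniformlyOn
    rw [Metric.tendstoUniformlyOn_iff]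
    intro ε hε
    filter_upwards [Metric.tendsto_nhds.mp hgf ε hε] with n hn z hz
    have hz' : 0 < z.re := hz
    rw [extFun_apply f hz', extFun_apply (g n) hz']
    calc dist (f ⟨z, hz'⟩) ((g n) ⟨z, hz'⟩) ≤ dist f (g n) := dist_coe_le_dist _
      _ < ε := by rwa [dist_comm] at hn
  exact hloc.differentiableOn (Filter.Eventually.of_forall fun n => hg n) RHP_open

/-- (Proposition 4): for every `β` with `Re β ≥ 0`, the product
`L↓_β L↑_β` is a compact operator on `H^∞(Π)`. -/
theorem Ldn_Lup_compact (β : ℂ) (hβ : 0 ≤ β.re)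
    (Lup Ldn : ↥Hinf →L[ℂ] ↥Hinf) (hup : IsLup β Lup) (hdn : IsLdn Ldn) :
    IsCompactOperator ⇑(Ldn ∘L Lup) := by
  classical
  set KK : Set ℂ := Metric.closedBall (3/4 : ℂ) (1/4) with hKKdef
  have hKR : KK ⊆ RHP := by
    intro z hz
    have := re_ge_of_mem_closedBall hz
    have hre : ((3:ℂ)/4).re = 3/4 := by norm_num
    show 0 < z.re
    rw [hre] at this; linarith
  haveI : CompactSpace ↥KK := isCompact_iff_compactSpace.mp (isCompact_closedBall _ _)
  set A : Set (↥KK →ᵇ ℂ) :=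
    {g | (∀ x y : ↥KK, dist (g x) (g y) ≤ 4 * dist x.1 y.1) ∧
      ∀ x : ↥KK, g x ∈ Metric.closedBall (0 : ℂ) 1} with hAdef
  have hA : IsCompact (closure A) := by
    apply arzela_ascoli (Metric.closedBall (0 : ℂ) 1) (isCompact_closedBall _ _) A
      (fun g x hg => hg.2 x)
    apply Metric.equicontinuous_of_continuity_modulus (fun t => 4 * t)
    · have : Filter.Tendsto (fun t : ℝ => 4 * t) (nhds 0) (nhds (4 * 0)) :=
        (continuous_const.mul continuous_id).tendsto 0
      simpa using this
    · intro x y i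
      exact i.2.1 x y
  set c : ℝ := Real.exp (Real.pi * |(2 * β).im|) with hcdef
  have hc0 : 0 < c := Real.exp_pos _
  set M : ↥RHP → ℂ := fun z => (1 + (1 + z.1)) ^ (-(2 * β)) with hMdef
  have h2r : ∀ z : ↥RHP, (1 : ℂ) + (1 + z.1) = 2 + z.1 := fun z => by ring
  have hMb : ∀ z : ↥RHP, ‖(M z)‖ ≤ c := by
    intro z
    show ‖((1 + (1 + z.1)) ^ (-(2 * β)))‖ ≤ c
    rw [h2r z]
    exact M_bound' β hβ z.2
  have hMne : ∀ z : ↥RHP, (0:ℝ) < (1 + (1 + z.1)).re := by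
    intro z
    have := z.2
    have h : (0:ℝ) < z.1.re := this
    simp only [Complex.add_re, Complex.one_re]
    linarith
  have hMcont : Continuous M := by
    apply Continuous.cpow
    · exact continuous_const.add (continuous_const.add continuous_subtype_val)
    · exact continuous_const
    · intro z
      exact Complex.mem_slitPlane_iff.mpr (Or.inl (hMne z))
  set φ : ↥RHP → ↥KK := fun z => ⟨(1 + z.1) / (1 + (1 + z.1)), phi_mem' z.2⟩ with hφdef
  have hφcont : Continuous φ := by
    apply Continuous.subtype_mk
    apply Continuous.div
    · exact continuous_const.add continuous_subtype_val
    · exact continuous_const.add (continuous_const.add continuous_subtype_val)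
    · intro z
      intro h
      have := hMne z
      rw [h] at this
      simp at this
  set Ψ : (↥KK →ᵇ ℂ) → (↥RHP →ᵇ ℂ) := fun g =>
    BoundedContinuousFunction.ofNormedAddCommGroup (fun z => M z * g (φ z))
      (hMcont.mul (g.continuous.comp hφcont)) (c * ‖g‖)
      (fun z => by
        rw [norm_mul]
        exact mul_le_mul (hMb z) (g.norm_coe_le_norm _) (norm_nonneg _) hc0.le) with hΨdef
  have hΨapp : ∀ g z, Ψ g z = M z * g (φ z) := fun g z => rfl
  have hΨcont : Continuous Ψ := by
    apply LipschitzWith.continuous (K := ⟨c, hc0.le⟩)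
    apply LipschitzWith.of_dist_le_mul
    intro g h
    show dist (Ψ g) (Ψ h) ≤ c * dist g h
    rw [BoundedContinuousFunction.dist_le (by positivity)]
    intro z
    have heq : dist (Ψ g z) (Ψ h z) = ‖(M z)‖ * dist (g (φ z)) (h (φ z)) := by
      rw [hΨapp, hΨapp, Complex.dist_eq, Complex.dist_eq, ← mul_sub, norm_mul]
    rw [heq]
    exact mul_le_mul (hMb z) (dist_coe_le_dist _) dist_nonneg hc0.le
  set S : Set (↥RHP →ᵇ ℂ) := Ψ '' (closure A) with hSdef
  have hS : IsCompact S := hA.image hΨcont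
  refine ⟨((Subtype.val : ↥Hinf → (↥RHP →ᵇ ℂ)) ⁻¹' S : Set ↥Hinf), ?_, ?_⟩
  · rw [Topology.IsEmbedding.subtypeVal.isCompact_iff]
    have himg : (Subtype.val : ↥Hinf → (↥RHP →ᵇ ℂ)) '' ((Subtype.val : ↥Hinf → (↥RHP →ᵇ ℂ)) ⁻¹' S) = (Hinf : Set (↥RHP →ᵇ ℂ)) ∩ S := by
      ext x
      constructor
      · rintro ⟨y, hy, rfl⟩
        exact ⟨y.2, hy⟩
      · rintro ⟨hx1, hx2⟩
        exact ⟨⟨x, hx1⟩, hx2, rfl⟩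
    rw [himg]
    exact hS.inter_left Hinf_closed
  · apply Filter.mem_of_superset (Metric.ball_mem_nhds 0 one_pos)
    intro f hf
    show ((Ldn ∘L Lup) f : ↥RHP →ᵇ ℂ) ∈ S
    have hf1 : ‖(f : ↥RHP →ᵇ ℂ)‖ ≤ 1 := by
      have h1 : ‖f‖ < 1 := by rwa [mem_ball_zero_iff] at hf
      exact h1.le
    have hfH : DifferentiableOn ℂ (extFun (f : ↥RHP →ᵇ ℂ)) RHP := f.2
    set g : ↥KK →ᵇ ℂ := BoundedContinuousFunction.ofNormedAddCommGroup
      (fun w : ↥KK => (f : ↥RHP →ᵇ ℂ) ⟨w.1, hKR w.2⟩)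
      ((f : ↥RHP →ᵇ ℂ).continuous.comp (Continuous.subtype_mk continuous_subtype_val _)) 1
      (fun w => le_trans (norm_coe_le_norm _ _) hf1) with hgdef
    have hgapp : ∀ w : ↥KK, g w = extFun (f : ↥RHP →ᵇ ℂ) w.1 := by
      intro w
      rw [extFun_apply _ (hKR w.2)]
      rfl
    refine ⟨g, subset_closure ⟨?_, ?_⟩, ?_⟩
    · intro x y
      rw [hgapp x, hgapp y]
      exact lip_on_K hfH hf1 x.2 y.2
    · intro x
      rw [Metric.mem_closedBall, dist_zero_right, hgapp x]
      exact le_trans (extFun_norm_le _ _) hf1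
    · apply BoundedContinuousFunction.ext
      intro z
      have h1 : ((Ldn ∘L Lup) f : ↥RHP →ᵇ ℂ) z = (Lup f : ↥RHP →ᵇ ℂ) ⟨1 + z.1, mem_shift z⟩ :=
        hdn (Lup f) z
      have h2 := hup f ⟨1 + z.1, mem_shift z⟩
      rw [hΨapp, h1, h2]
      rfl
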